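/- Star-shapedness of accessible Weyl channels: let Φ = exp(Σ_μ t_μ L_μ) with t_μ ≥ 0, where L_μ = U_μ ⊗ conj(U_μ) − I_{N²} are commuting Weyl Lindblad generators. Then for every m ∈ (0,1], the convex combination m·Φ + (1−m)·Φ_*, where Φ_* = (1/N²) Σ_μ U_μ ⊗ conj(U_μ) is the completely depolarizing superoperator, is also of the form exp(Σ_μ t'_μ L_μ) with t'_μ = t_μ − (log m)/N² ≥ 0. In particular Φ_* satisfies Φ_*² = Φ_* and Φ Φ_* = Φ_* for any such Φ. -/

import Mathlib

open Matrix Complex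
open scoped Kronecker
open scoped Nat

/-- The `N`-th root of unity `ω = exp(2πi/N)`. -/
noncomputable def omega (N : ℕ) : ℂ := Complex.exp (2 * Real.pi * Complex.I / N)

/-- The cyclic shift matrix `X` with `X |i⟩ = |i ⊕ 1⟩`. -/
def Xmat (N : ℕ) [NeZero N] : Matrix (Fin N) (Fin N) ℂ :=
  fun i j => if i = j + 1 then 1 else 0

/-- The clock matrix `Z = diag(1, ω, ..., ω^{N-1})`. -/
noncomputable def Zmat (N : ℕ) [NeZero N] : Matrix (Fin N) (Fin N) ℂ :=
  Matrix.diagonal (fun j => omega N ^ (j : ℕ))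

/-- The Weyl matrices `U_μ = X^k Z^l`, indexed by `μ = (k,l)`. -/
noncomputable def WeylU (N : ℕ) [NeZero N] (μ : Fin N × Fin N) : Matrix (Fin N) (Fin N) ℂ :=
  Xmat N ^ (μ.1 : ℕ) * Zmat N ^ (μ.2 : ℕ)

/-- The Weyl Lindblad generators `L_μ = U_μ ⊗ conj(U_μ) − I`. -/
noncomputable def weylLind (N : ℕ) [NeZero N] (μ : Fin N × Fin N) :
    Matrix (Fin N × Fin N) (Fin N × Fin N) ℂ :=
  WeylU N μ ⊗ₖ (WeylU N μ).map (starRingEnd ℂ) - 1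

/-- The completely depolarizing superoperator `Φ_* = (1/N²) Σ_μ U_μ ⊗ conj(U_μ)`. -/
noncomputable def depol (N : ℕ) [NeZero N] : Matrix (Fin N × Fin N) (Fin N × Fin N) ℂ :=
  ((N : ℂ) ^ 2)⁻¹ • ∑ μ : Fin N × Fin N, WeylU N μ ⊗ₖ (WeylU N μ).map (starRingEnd ℂ)

/-! ### General exponential lemmas -/

section general
variable {𝔸 : Type*} [NormedRing 𝔸] [NormedAlgebra ℂ 𝔸] [CompleteSpace 𝔸]

lemma exp_mul_eq_of_mul_eq_zero (A B : 𝔸) (h : A * B = 0) :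
    NormedSpace.exp A * B = B := by
  rw [NormedSpace.exp_eq_tsum ℂ]
  rw [← (NormedSpace.expSeries_summable' (𝕂 := ℂ) A).tsum_mul_right B]
  rw [show (fun n : ℕ => ((n !⁻¹ : ℂ) • A ^ n) * B) = fun n : ℕ => if n = 0 then B else 0 by
    funext n
    cases n with
    | zero => simp
    | succ k => simp [pow_succ, mul_assoc, h]]
  rw [tsum_eq_single 0 (by intro b hb; exact if_neg hb)]; simp

lemma exp_smul_idem (z : ℂ) (Q : 𝔸) (hQ : Q * Q = Q) :
    NormedSpace.exp (z • Q) = 1 + (Complex.exp z - 1) • Q := by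
  have hpow : ∀ n : ℕ, Q ^ (n + 1) = Q := by
    intro n
    induction n with
    | zero => simp
    | succ k ih => rw [pow_succ, ih, hQ]
  rw [NormedSpace.exp_eq_tsum ℂ]
  beta_reduce
  have hsum : Summable fun n : ℕ => (n !⁻¹ : ℂ) • (z • Q) ^ n :=
    NormedSpace.expSeries_summable' (𝕂 := ℂ) (z • Q)
  rw [Summable.tsum_eq_zero_add hsum]
  have h1 : ∀ n : ℕ, ((n + 1)!⁻¹ : ℂ) • (z • Q) ^ (n + 1)
      = (((n + 1)!⁻¹ : ℂ) * z ^ (n + 1)) • Q := by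
    intro n
    rw [smul_pow, hpow, smul_smul]
  simp only [h1]
  have hsum2 : Summable fun n : ℕ => ((n + 1)!⁻¹ : ℂ) * z ^ (n + 1) := by
    have := (NormedSpace.expSeries_summable' (𝕂 := ℂ) z)
    have := (summable_nat_add_iff 1).2 this
    simpa [smul_eq_mul] using this
  rw [Summable.tsum_smul_const hsum2]
  have hz : ∑' n : ℕ, ((n + 1)!⁻¹ : ℂ) * z ^ (n + 1) = Complex.exp z - 1 := by
    have := NormedSpace.exp_eq_tsum (𝕂 := ℂ) (𝔸 := ℂ)
    have hz2 : Complex.exp z = ∑' n : ℕ, (n !⁻¹ : ℂ) • z ^ n := by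
      rw [Complex.exp_eq_exp_ℂ, this]
    rw [Summable.tsum_eq_zero_add (NormedSpace.expSeries_summable' (𝕂 := ℂ) z)] at hz2
    simp only [smul_eq_mul] at hz2 ⊢
    simp at hz2
    rw [hz2]; ring
  rw [hz]
  simp
end general

section matexp
variable {n : Type*} [Fintype n] [DecidableEq n]

lemma mat_exp_mul_eq_of_mul_eq_zero (A B : Matrix n n ℂ) (h : A * B = 0) :
    NormedSpace.exp A * B = B := by
  letI : SeminormedRing (Matrix n n ℂ) := Matrix.linftyOpSemiNormedRing
  letI : NormedRing (Matrix n n ℂ) := Matrix.linftyOpNormedRing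
  letI : NormedAlgebra ℂ (Matrix n n ℂ) := Matrix.linftyOpNormedAlgebra
  exact exp_mul_eq_of_mul_eq_zero A B h

lemma mat_exp_smul_idem (z : ℂ) (Q : Matrix n n ℂ) (hQ : Q * Q = Q) :
    NormedSpace.exp (z • Q) = 1 + (Complex.exp z - 1) • Q := by
  letI : SeminormedRing (Matrix n n ℂ) := Matrix.linftyOpSemiNormedRing
  letI : NormedRing (Matrix n n ℂ) := Matrix.linftyOpNormedRing
  letI : NormedAlgebra ℂ (Matrix n n ℂ) := Matrix.linftyOpNormedAlgebra
  exact exp_smul_idem z Q hQ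
end matexp

/-! ### Weyl matrix algebra -/

variable (N : ℕ) [NeZero N]

lemma omega_pow_N : omega N ^ N = 1 := by
  rw [omega, ← Complex.exp_nat_mul]
  have hN : (N : ℂ) ≠ 0 := Nat.cast_ne_zero.2 (NeZero.ne N)
  rw [mul_div_cancel₀ _ hN]
  simpa using Complex.exp_two_pi_mul_I

lemma omega_pow_mod (a : ℕ) : omega N ^ (a % N) = omega N ^ a :=
  (pow_eq_pow_mod a (omega_pow_N N)).symm

lemma omega_mul_star : omega N * (starRingEnd ℂ) (omega N) = 1 := by
  rw [omega, ← Complex.exp_conj, ← Complex.exp_add]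
  have : (starRingEnd ℂ) (2 * Real.pi * Complex.I / N) = -(2 * Real.pi * Complex.I / N) := by
    simp [map_div₀, Complex.conj_I, map_ofNat]
    ring
  rw [this, add_neg_cancel, Complex.exp_zero]

open Fin.NatCast in
lemma Xmat_pow (k : ℕ) : Xmat N ^ k = fun i j => if i = j + (k : Fin N) then 1 else 0 := by
  induction k with
  | zero => funext i j; simp [Matrix.one_apply, eq_comm]
  | succ n ih =>
    funext i j
    rw [pow_succ, Matrix.mul_apply, ih]
    simp only [Xmat]
    rw [Finset.sum_eq_single (j + 1)]
    · rw [if_pos rfl, mul_one]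
      have h2 : j + 1 + (n : Fin N) = j + ((n + 1 : ℕ) : Fin N) := by push_cast; abel
      rw [h2]
    · intro b _ hb
      rw [if_neg hb, mul_zero]
    · simp

lemma Xmat_pow_N : Xmat N ^ N = 1 := by
  rw [Xmat_pow]
  funext i j
  simp [Matrix.one_apply, eq_comm]

lemma Xmat_pow_mod (a : ℕ) : Xmat N ^ (a % N) = Xmat N ^ a :=
  (pow_eq_pow_mod a (Xmat_pow_N N)).symm

lemma Zmat_pow_N : Zmat N ^ N = 1 := by
  rw [Zmat, Matrix.diagonal_pow,
    show ((fun j : Fin N => omega N ^ (j : ℕ)) ^ N) = fun _ => (1 : ℂ) from funext fun j => by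
      show (omega N ^ (j : ℕ)) ^ N = 1
      rw [← pow_mul, mul_comm, pow_mul, omega_pow_N, one_pow],
    Matrix.diagonal_one]

lemma Zmat_pow_mod (a : ℕ) : Zmat N ^ (a % N) = Zmat N ^ a :=
  (pow_eq_pow_mod a (Zmat_pow_N N)).symm

lemma Z_mul_X : Zmat N * Xmat N = omega N • (Xmat N * Zmat N) := by
  funext i j
  simp only [Matrix.smul_apply, smul_eq_mul, Zmat, Matrix.diagonal_mul, Matrix.mul_diagonal, Xmat]
  by_cases h : i = j + 1
  · subst h
    simp only [if_pos rfl, one_mul, mul_one]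
    have hv : ((j + 1 : Fin N) : ℕ) = ((j : ℕ) + 1) % N := by
      rw [Fin.val_add, Fin.val_one']
      conv_rhs => rw [Nat.add_mod, Nat.mod_eq_of_lt j.isLt]
    rw [hv, omega_pow_mod, pow_succ']
    simp [mul_comm]
  · simp [h]

lemma Zpow_mul_X (l : ℕ) : Zmat N ^ l * Xmat N = omega N ^ l • (Xmat N * Zmat N ^ l) := by
  induction l with
  | zero => simp
  | succ k ih =>
    rw [pow_succ, mul_assoc, Z_mul_X, mul_smul_comm, ← mul_assoc, ih, smul_mul_assoc,
      smul_smul, mul_assoc, ← pow_succ, ← pow_succ']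

lemma Zpow_mul_Xpow (l k : ℕ) :
    Zmat N ^ l * Xmat N ^ k = omega N ^ (l * k) • (Xmat N ^ k * Zmat N ^ l) := by
  induction k with
  | zero => simp
  | succ k ih =>
    rw [pow_succ, ← mul_assoc, ih, smul_mul_assoc, mul_assoc, Zpow_mul_X, mul_smul_comm,
      smul_smul, ← pow_add, ← mul_assoc, ← pow_succ, Nat.mul_succ]

lemma WeylU_mul (μ ν : Fin N × Fin N) :
    WeylU N μ * WeylU N ν = omega N ^ ((μ.2 : ℕ) * (ν.1 : ℕ)) • WeylU N (μ + ν) := by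
  obtain ⟨k, l⟩ := μ; obtain ⟨k', l'⟩ := ν
  show Xmat N ^ (k : ℕ) * Zmat N ^ (l : ℕ) * (Xmat N ^ (k' : ℕ) * Zmat N ^ (l' : ℕ)) = _
  rw [mul_assoc, ← mul_assoc (Zmat N ^ (l : ℕ)), Zpow_mul_Xpow, smul_mul_assoc, mul_smul_comm]
  congr 1
  rw [mul_assoc (Xmat N ^ (k' : ℕ)), ← pow_add, ← mul_assoc, ← pow_add]
  show _ = Xmat N ^ (((k + k' : Fin N) : ℕ)) * Zmat N ^ (((l + l' : Fin N) : ℕ))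
  rw [Fin.val_add, Fin.val_add, Xmat_pow_mod, Zmat_pow_mod]

/-- The superoperators `W_μ = U_μ ⊗ conj(U_μ)`. -/
noncomputable def wop (μ : Fin N × Fin N) : Matrix (Fin N × Fin N) (Fin N × Fin N) ℂ :=
  WeylU N μ ⊗ₖ (WeylU N μ).map (starRingEnd ℂ)

lemma wop_mul (μ ν : Fin N × Fin N) : wop N μ * wop N ν = wop N (μ + ν) := by
  unfold wop
  have hmap : ((omega N ^ ((μ.2 : ℕ) * (ν.1 : ℕ)) • WeylU N (μ + ν)).map (starRingEnd ℂ))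
      = (starRingEnd ℂ) (omega N ^ ((μ.2 : ℕ) * (ν.1 : ℕ))) •
        (WeylU N (μ + ν)).map (starRingEnd ℂ) := by
    funext i j
    simp [Matrix.map_apply, Matrix.smul_apply, smul_eq_mul]
  rw [← Matrix.mul_kronecker_mul, ← Matrix.map_mul, WeylU_mul, hmap, Matrix.smul_kronecker,
    Matrix.kronecker_smul, smul_smul, map_pow, ← mul_pow, omega_mul_star, one_pow, one_smul]

lemma depol_eq_wop : depol N = ((N : ℂ) ^ 2)⁻¹ • ∑ ν, wop N ν := rfl

lemma weylLind_eq_wop (μ : Fin N × Fin N) : weylLind N μ = wop N μ - 1 := rfl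

lemma wop_mul_sum (μ : Fin N × Fin N) : wop N μ * (∑ ν, wop N ν) = ∑ ν, wop N ν := by
  rw [Finset.mul_sum]
  simp only [wop_mul]
  exact Fintype.sum_equiv (Equiv.addLeft μ) _ _ (fun ν => rfl)

lemma sum_mul_wop (μ : Fin N × Fin N) : (∑ ν, wop N ν) * wop N μ = ∑ ν, wop N ν := by
  rw [Finset.sum_mul]
  simp only [wop_mul]
  exact Fintype.sum_equiv (Equiv.addRight μ) _ _ (fun ν => rfl)

lemma Nsq_ne_zero : ((N : ℂ) ^ 2) ≠ 0 :=
  pow_ne_zero _ (Nat.cast_ne_zero.2 (NeZero.ne N))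

lemma sum_wop_eq : (∑ ν, wop N ν) = ((N : ℂ) ^ 2) • depol N := by
  rw [depol_eq_wop, smul_smul, mul_inv_cancel₀ (Nsq_ne_zero N), one_smul]

lemma wop_mul_depol (μ : Fin N × Fin N) : wop N μ * depol N = depol N := by
  rw [depol_eq_wop, mul_smul_comm, wop_mul_sum]

lemma depol_mul_wop (μ : Fin N × Fin N) : depol N * wop N μ = depol N := by
  rw [depol_eq_wop, smul_mul_assoc, sum_mul_wop]

lemma depol_idem : depol N * depol N = depol N := by
  nth_rewrite 1 [depol_eq_wop]
  rw [smul_mul_assoc, Finset.sum_mul]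
  simp only [wop_mul_depol]
  rw [Finset.sum_const, Finset.card_univ, Fintype.card_prod, Fintype.card_fin,
    ← Nat.cast_smul_eq_nsmul ℂ, smul_smul]
  rw [show ((N * N : ℕ) : ℂ) = (N : ℂ) ^ 2 by push_cast; ring, inv_mul_cancel₀ (Nsq_ne_zero N),
    one_smul]

lemma lind_mul_depol (μ : Fin N × Fin N) : weylLind N μ * depol N = 0 := by
  rw [weylLind_eq_wop, sub_mul, one_mul, wop_mul_depol, sub_self]

lemma depol_mul_lind (μ : Fin N × Fin N) : depol N * weylLind N μ = 0 := by
  rw [weylLind_eq_wop, mul_sub, mul_one, depol_mul_wop, sub_self]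

lemma lindsum_mul_depol (c : Fin N × Fin N → ℂ) :
    (∑ μ, c μ • weylLind N μ) * depol N = 0 := by
  rw [Finset.sum_mul]
  simp [smul_mul_assoc, lind_mul_depol]

lemma depol_mul_lindsum (c : Fin N × Fin N → ℂ) :
    depol N * (∑ μ, c μ • weylLind N μ) = 0 := by
  rw [Finset.mul_sum]
  simp [mul_smul_comm, depol_mul_lind]

lemma sum_lind_eq : (∑ μ, weylLind N μ) = ((N : ℂ) ^ 2) • (depol N - 1) := by
  simp only [weylLind_eq_wop]
  rw [Finset.sum_sub_distrib, Finset.sum_const, Finset.card_univ, Fintype.card_prod,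
    Fintype.card_fin, sum_wop_eq, smul_sub]
  congr 1
  rw [← Nat.cast_smul_eq_nsmul ℂ]
  congr 1
  push_cast; ring

/-- Star-shapedness of accessible Weyl channels: for `Φ = exp(Σ_μ t_μ L_μ)` with
`t_μ ≥ 0` and `m ∈ (0,1]`, the mixture `m Φ + (1−m) Φ_*` equals
`exp(Σ_μ t'_μ L_μ)` with `t'_μ = t_μ − (log m)/N² ≥ 0`. Moreover `Φ_*² = Φ_*` and
`Φ Φ_* = Φ_*`. -/
theorem accessible_star_shaped (N : ℕ) [NeZero N] (t : Fin N × Fin N → ℝ)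
    (ht : ∀ μ, 0 ≤ t μ) (m : ℝ) (hm0 : 0 < m) (hm1 : m ≤ 1) :
    (∀ μ, 0 ≤ t μ - Real.log m / (N : ℝ) ^ 2) ∧
    (m : ℂ) • NormedSpace.exp (∑ μ, (t μ : ℂ) • weylLind N μ) + ((1 : ℂ) - m) • depol N
      = NormedSpace.exp (∑ μ, ((t μ - Real.log m / (N : ℝ) ^ 2 : ℝ) : ℂ) • weylLind N μ) ∧
    depol N * depol N = depol N ∧
    NormedSpace.exp (∑ μ, (t μ : ℂ) • weylLind N μ) * depol N = depol N := by
  have hNR : (0 : ℝ) < (N : ℝ) ^ 2 := by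
    have : 0 < (N : ℝ) := Nat.cast_pos.2 (Nat.pos_of_ne_zero (NeZero.ne N))
    positivity
  have hlog : Real.log m ≤ 0 := Real.log_nonpos (le_of_lt hm0) hm1
  have h1 : ∀ μ, 0 ≤ t μ - Real.log m / (N : ℝ) ^ 2 := by
    intro μ
    have : Real.log m / (N : ℝ) ^ 2 ≤ 0 := div_nonpos_of_nonpos_of_nonneg hlog (le_of_lt hNR)
    linarith [ht μ]
  set S := ∑ μ, (t μ : ℂ) • weylLind N μ with hS
  have hSP : S * depol N = 0 := lindsum_mul_depol N _
  have hexpSP : NormedSpace.exp S * depol N = depol N :=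
    mat_exp_mul_eq_of_mul_eq_zero S _ hSP
  refine ⟨h1, ?_, depol_idem N, hexpSP⟩
  -- the mixture identity
  set lgC : ℂ := (Real.log m : ℂ) with hlgC
  set Q : Matrix (Fin N × Fin N) (Fin N × Fin N) ℂ := 1 - depol N with hQdef
  have hQ : Q * Q = Q := by
    rw [hQdef, sub_mul, one_mul, mul_sub, mul_one, depol_idem, sub_self, sub_zero]
  have hsplit : (∑ μ, ((t μ - Real.log m / (N : ℝ) ^ 2 : ℝ) : ℂ) • weylLind N μ)
      = S + (-(lgC) / (N : ℂ) ^ 2) • ∑ μ, weylLind N μ := by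
    rw [hS, Finset.smul_sum, ← Finset.sum_add_distrib]
    refine Finset.sum_congr rfl fun μ _ => ?_
    rw [← add_smul]
    congr 1
    push_cast
    ring
  have hterm : (-(lgC) / (N : ℂ) ^ 2) • (∑ μ, weylLind N μ) = lgC • Q := by
    rw [sum_lind_eq, smul_smul, div_mul_cancel₀ _ (Nsq_ne_zero N), hQdef]
    rw [smul_sub, smul_sub, neg_smul, neg_smul, sub_neg_eq_add]
    abel
  have hcomm : Commute S (lgC • Q) := by
    have hSQ : S * Q = S := by rw [hQdef, mul_sub, mul_one, hSP, sub_zero]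
    have hQS : Q * S = S := by
      rw [hQdef, sub_mul, one_mul, depol_mul_lindsum N _, sub_zero]
    show S * (lgC • Q) = (lgC • Q) * S
    rw [mul_smul_comm, smul_mul_assoc, hSQ, hQS]
  rw [hsplit, hterm, Matrix.exp_add_of_commute S (lgC • Q) hcomm,
    mat_exp_smul_idem lgC Q hQ]
  have hexplg : Complex.exp lgC = (m : ℂ) := by
    rw [hlgC, ← Complex.ofReal_exp, Real.exp_log hm0]
  rw [hexplg, mul_add, mul_one, mul_smul_comm, hQdef, mul_sub, mul_one, hexpSP]
  module
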